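/- arXiv:2112.06181 — 2 statements merged into one kernel-verified Lean document; each statement's English description precedes it below -/
import Mathlib

section
/- (Boundedness of the Q-learning iterates.) Let S and A be nonempty finite sets, γ ∈ [0,1), R ≥ 0, and r : S × A → ℝ with |r(s,a)| ≤ R for all (s,a). Let p be a transition kernel with p(·|s,a) ∈ Δ(S) for all (s,a). Let (Q̂_k)_{k≥0} with Q̂_k : S × A → ℝ and (v̂_k)_{k≥0} with v̂_k : S → ℝ satisfy |v̂_k(s)| ≤ max_{(s',a')} |Q̂_k(s',a')| for all k and s, and suppose Q̂_{k+1}(s,a) = Q̂_k(s,a) + β̄_k(s,a) (r(s,a) + γ Σ_{s'} p(s'|s,a) v̂_k(s') − Q̂_k(s,a)) for step sizes β̄_k(s,a) ∈ [0,1]. Then for all k, max_{(s,a)} |Q̂_k(s,a)| ≤ max{ max_{(s,a)} |Q̂_0(s,a)|, R/(1−γ) }. -/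
open Filter Topology Finset

noncomputable section

def simplex (S : Type) [Fintype S] : Set (S → ℝ) :=
  {μ | (∀ s, 0 ≤ μ s) ∧ ∑ s, μ s = 1}

/-- boundedness of the Q-learning iterates. -/
theorem q_learning_iterates_bounded
    {S A : Type} [Fintype S] [Fintype A] [Nonempty S] [Nonempty A]
    (γ : ℝ) (hγ0 : 0 ≤ γ) (hγ1 : γ < 1)
    (R : ℝ) (hR : 0 ≤ R)
    (r : S → A → ℝ) (hr : ∀ s a, |r s a| ≤ R)
    (p : S → A → S → ℝ) (hp : ∀ s a, p s a ∈ simplex S)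
    (Q : ℕ → S → A → ℝ) (v : ℕ → S → ℝ)
    (hv : ∀ k s, |v k s| ≤
      Finset.univ.sup' Finset.univ_nonempty (fun x : S × A => |Q k x.1 x.2|))
    (β : ℕ → S → A → ℝ) (hβ : ∀ k s a, β k s a ∈ Set.Icc (0:ℝ) 1)
    (hup : ∀ k s a, Q (k+1) s a = Q k s a
        + β k s a * (r s a + γ * (∑ s', p s a s' * v k s') - Q k s a)) :
    ∀ k, Finset.univ.sup' Finset.univ_nonempty (fun x : S × A => |Q k x.1 x.2|)
      ≤ max (Finset.univ.sup' Finset.univ_nonempty (fun x : S × A => |Q 0 x.1 x.2|))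
          (R / (1 - γ)) := by
  set B := R / (1 - γ) with hB
  have h1γ : 0 < 1 - γ := by linarith
  have hRB : R ≤ (1 - γ) * B := by
    rw [hB]; field_simp; exact le_rfl
  intro k
  induction k with
  | zero => exact le_max_left _ _
  | succ k ih =>
    set Mk := Finset.univ.sup' Finset.univ_nonempty (fun x : S × A => |Q k x.1 x.2|)
      with hMk
    have key : ∀ s a, |Q (k+1) s a| ≤ max Mk B := by
      intro s a
      have hβ' := hβ k s a
      obtain ⟨hβ0, hβ1⟩ := hβ'
      have hMk0 : 0 ≤ Mk := le_trans (abs_nonneg _)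
        (Finset.le_sup' (fun x : S × A => |Q k x.1 x.2|)
          (Finset.mem_univ (Classical.arbitrary S, Classical.arbitrary A)))
      have hQ : |Q k s a| ≤ Mk :=
        Finset.le_sup' (fun x : S × A => |Q k x.1 x.2|) (Finset.mem_univ (s, a))
      have hsum : |∑ s', p s a s' * v k s'| ≤ Mk := by
        calc |∑ s', p s a s' * v k s'| ≤ ∑ s', |p s a s' * v k s'| :=
              Finset.abs_sum_le_sum_abs _ _
          _ ≤ ∑ s', p s a s' * Mk := by
              apply Finset.sum_le_sum
              intro i _
              rw [abs_mul, abs_of_nonneg ((hp s a).1 i)]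
              exact mul_le_mul_of_nonneg_left (hv k i) ((hp s a).1 i)
          _ = Mk := by rw [← Finset.sum_mul, (hp s a).2, one_mul]
      rw [hup k s a]
      have hrw : Q k s a + β k s a * (r s a + γ * (∑ s', p s a s' * v k s') - Q k s a)
          = (1 - β k s a) * Q k s a
            + β k s a * (r s a + γ * ∑ s', p s a s' * v k s') := by ring
      rw [hrw]
      have hT : |r s a + γ * ∑ s', p s a s' * v k s'| ≤ max Mk B := by
        have h1 : |r s a + γ * ∑ s', p s a s' * v k s'| ≤ R + γ * Mk := by
          calc _ ≤ |r s a| + |γ * ∑ s', p s a s' * v k s'| := abs_add_le _ _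
            _ ≤ R + γ * Mk := by
                rw [abs_mul, abs_of_nonneg hγ0]
                exact add_le_add (hr s a) (mul_le_mul_of_nonneg_left hsum hγ0)
        rcases le_total Mk B with h | h
        · have h2 : R + γ * Mk ≤ B := by nlinarith
          exact le_trans h1 (le_trans h2 (le_max_right _ _))
        · have h2 : R + γ * Mk ≤ Mk := by nlinarith
          exact le_trans h1 (le_trans h2 (le_max_left _ _))
      calc |(1 - β k s a) * Q k s a + β k s a * (r s a + γ * ∑ s', p s a s' * v k s')|
          ≤ (1 - β k s a) * |Q k s a|
            + β k s a * |r s a + γ * ∑ s', p s a s' * v k s'| := by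
            refine le_trans (abs_add_le _ _) ?_
            rw [abs_mul, abs_mul,
              abs_of_nonneg (by linarith : (0:ℝ) ≤ 1 - β k s a), abs_of_nonneg hβ0]
        _ ≤ (1 - β k s a) * max Mk B + β k s a * max Mk B := by
            gcongr
            · exact le_max_of_le_left hQ
        _ = max Mk B := by ring
    have hsup : Finset.univ.sup' Finset.univ_nonempty
        (fun x : S × A => |Q (k+1) x.1 x.2|) ≤ max Mk B := by
      apply Finset.sup'_le
      intro x _
      exact key x.1 x.2
    exact le_trans hsup (max_le ih (le_max_right _ _))
end
end

section
/- (Final contraction step of the convergence proof.) Let S and A be nonempty finite sets and p a transition kernel with p(·|s,a) ∈ Δ(S) for all (s,a). Let d_α, d_β ∈ (0,1], γ ∈ (0,1) with γ < d_α d_β, and λ ∈ (1, d_α d_β / γ). Let (Γ_k)_{k≥0}, (Q̄_k)_{k≥0} be uniformly bounded sequences of functions S × A → ℝ and (v̄_k)_{k≥0} a uniformly bounded sequence of functions S → ℝ, and let β̄_k(s) ∈ [0,1] satisfy β̄_k(s) → 0 and Σ_{k=0}^∞ β̄_k(s) = ∞ for each s ∈ S. Assume: (i) Γ_{k+1}(s,a)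 = Γ_k(s,a) + β̄_k(s) d_β (γ Σ_{s'} p(s'|s,a) v̄_k(s') − Q̄_k(s,a) + ζ_k(s,a)) for all k and (s,a), where ζ_k(s,a) → 0; (ii) ε̲_k(s) ≤ v̄_k(s) ≤ (λ/d_α) max_{a} |Q̄_k(s,a)| + ε̄_k(s) for all k and s, where ε̲_k(s) → 0 and ε̄_k(s) → 0; (iii) liminf_{k→∞} Γ_k(s,a) ≥ 0 for all (s,a); and (iv) η̄_k(s,a) + (1/d_β) Γ_k(s,a) ≥ |Q̄_k(s,a)| ≥ Q̄_k(s,a) ≥ Γ_k(s,a) + η̲_k(s,a) for all k and (s,a), where η̄_k(s,a) → 0 and η̲_k(s,a) → 0. Then Γ_k(s,a) → 0 and Q̄_k(s,a) → 0 for every (s,a) ∈ S × A, and v̄_k(s) → 0 for every s ∈ S. -/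
open Filter Topology Finset

noncomputable section

private lemma le_sum_abs₁ {S : Type} [Fintype S] (f : S → ℝ) (s : S) :
    |f s| ≤ ∑ t, |f t| :=
  Finset.single_le_sum (f := fun t => |f t|) (fun t _ => abs_nonneg (f t)) (Finset.mem_univ s)

private lemma le_sum_abs₂ {S A : Type} [Fintype S] [Fintype A] (f : S → A → ℝ) (s : S) (a : A) :
    |f s a| ≤ ∑ t, ∑ b, |f t b| := by
  calc |f s a| ≤ ∑ b, |f s b| := le_sum_abs₁ (f s) a
    _ ≤ ∑ t, ∑ b, |f t b| :=
      Finset.single_le_sum (f := fun t => ∑ b, |f t b|)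
        (fun t _ => Finset.sum_nonneg fun b _ => abs_nonneg (f t b)) (Finset.mem_univ s)

private lemma sum_abs_tendsto_zero₁ {S : Type} [Fintype S] (f : ℕ → S → ℝ)
    (h : ∀ s, Tendsto (fun k => f k s) atTop (𝓝 0)) :
    Tendsto (fun k => ∑ s, |f k s|) atTop (𝓝 0) := by
  have := tendsto_finset_sum (Finset.univ : Finset S)
    (fun s _ => ((h s).abs : Tendsto (fun k => |f k s|) atTop (𝓝 |(0:ℝ)|)))
  simpa using this

private lemma sum_abs_tendsto_zero₂ {S A : Type} [Fintype S] [Fintype A] (f : ℕ → S → A → ℝ)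
    (h : ∀ s a, Tendsto (fun k => f k s a) atTop (𝓝 0)) :
    Tendsto (fun k => ∑ s, ∑ a, |f k s a|) atTop (𝓝 0) := by
  have := tendsto_finset_sum (Finset.univ : Finset S)
    (fun s _ => sum_abs_tendsto_zero₁ (fun k => f k s) (h s))
  simpa using this

/-- Decay lemma: if `ψ ≥ 0`, `ψ (k+1) ≤ (1 - b k) * ψ k` for large `k`, with `b k ≥ 0`
and `∑ b = ∞`, then `ψ → 0`. -/
private lemma decay_lemma (ψ b : ℕ → ℝ) (hψ0 : ∀ k, 0 ≤ ψ k)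
    (k0 : ℕ)
    (hstep : ∀ k, k0 ≤ k → ψ (k + 1) ≤ (1 - b k) * ψ k)
    (hsum : Tendsto (fun K => ∑ k ∈ Finset.range K, b k) atTop atTop) :
    Tendsto ψ atTop (𝓝 0) := by
  have key : ∀ n, ψ (k0 + n) ≤ ψ k0 * Real.exp (-(∑ j ∈ Finset.range n, b (k0 + j))) := by
    intro n
    induction n with
    | zero => simp
    | succ n ih =>
      have h1 : ψ (k0 + n + 1) ≤ (1 - b (k0 + n)) * ψ (k0 + n) :=
        hstep _ (Nat.le_add_right _ _)
      have hexp : 1 - b (k0 + n) ≤ Real.exp (-(b (k0 + n))) := by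
        have := Real.add_one_le_exp (-(b (k0 + n))); linarith
      have h2 : (1 - b (k0 + n)) * ψ (k0 + n) ≤
          Real.exp (-(b (k0 + n))) * (ψ k0 * Real.exp (-(∑ j ∈ Finset.range n, b (k0 + j)))) := by
        by_cases hc : 0 ≤ 1 - b (k0 + n)
        · exact mul_le_mul hexp ih (hψ0 _) (Real.exp_pos _).le
        · have hneg : (1 - b (k0 + n)) * ψ (k0 + n) ≤ 0 :=
            mul_nonpos_of_nonpos_of_nonneg (le_of_not_ge hc) (hψ0 _)
          exact hneg.trans
            (mul_nonneg (Real.exp_pos _).le (mul_nonneg (hψ0 _) (Real.exp_pos _).le))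
      have heq : Real.exp (-(b (k0 + n))) *
            (ψ k0 * Real.exp (-(∑ j ∈ Finset.range n, b (k0 + j)))) =
          ψ k0 * Real.exp (-(∑ j ∈ Finset.range (n + 1), b (k0 + j))) := by
        rw [Finset.sum_range_succ, neg_add, Real.exp_add]; ring
      calc ψ (k0 + (n + 1)) = ψ (k0 + n + 1) := rfl
        _ ≤ (1 - b (k0 + n)) * ψ (k0 + n) := h1
        _ ≤ _ := h2
        _ = _ := heq
  have htail : Tendsto (fun n => ∑ j ∈ Finset.range n, b (k0 + j)) atTop atTop := by
    have h1 : Tendsto (fun n => ∑ j ∈ Finset.range (k0 + n), b j) atTop atTop := by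
      have h := hsum.comp (tendsto_add_atTop_nat k0)
      exact h.congr (fun n => by rw [Function.comp_apply, Nat.add_comm n k0])
    have h2 := tendsto_atTop_add_const_right atTop (-(∑ j ∈ Finset.range k0, b j)) h1
    refine h2.congr (fun n => ?_)
    rw [Finset.sum_range_add]; ring
  have hrhs : Tendsto (fun n => ψ k0 * Real.exp (-(∑ j ∈ Finset.range n, b (k0 + j))))
      atTop (𝓝 0) := by
    have : Tendsto (fun n => Real.exp (-(∑ j ∈ Finset.range n, b (k0 + j)))) atTop (𝓝 0) :=
      Real.tendsto_exp_atBot.comp (tendsto_neg_atBot_iff.mpr htail)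
    simpa using this.const_mul (ψ k0)
  have hshift : Tendsto (fun n => ψ (k0 + n)) atTop (𝓝 0) := by
    refine tendsto_of_tendsto_of_tendsto_of_le_of_le tendsto_const_nhds hrhs
      (fun n => hψ0 _) (fun n => key n)
  have : Tendsto (fun n => ψ (n + k0)) atTop (𝓝 0) := by
    refine hshift.congr (fun n => by rw [Nat.add_comm])
  exact (tendsto_add_atTop_iff_nat k0).mp this

/-- final contraction step of the convergence proof. -/
theorem final_contraction_step
    {S A : Type} [Fintype S] [Fintype A] [Nonempty S] [Nonempty A]
    (p : S → A → S → ℝ) (hp : ∀ s a, p s a ∈ simplex S)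
    (dα dβ γ lam : ℝ)
    (hdα : dα ∈ Set.Ioc (0:ℝ) 1) (hdβ : dβ ∈ Set.Ioc (0:ℝ) 1)
    (hγ : γ ∈ Set.Ioo (0:ℝ) 1) (hγd : γ < dα * dβ)
    (hlam : lam ∈ Set.Ioo (1:ℝ) (dα * dβ / γ))
    (Γ Qb : ℕ → S → A → ℝ) (vb : ℕ → S → ℝ)
    (hΓbdd : ∃ B : ℝ, ∀ k s a, |Γ k s a| ≤ B)
    (hQbdd : ∃ B : ℝ, ∀ k s a, |Qb k s a| ≤ B)
    (hvbdd : ∃ B : ℝ, ∀ k s, |vb k s| ≤ B)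
    (β : ℕ → S → ℝ) (hβmem : ∀ k s, β k s ∈ Set.Icc (0:ℝ) 1)
    (hβlim : ∀ s, Tendsto (fun k => β k s) atTop (𝓝 0))
    (hβsum : ∀ s, Tendsto (fun K => ∑ k ∈ Finset.range K, β k s) atTop atTop)
    -- (i) recursion for Γ
    (ζ : ℕ → S → A → ℝ) (hζ : ∀ s a, Tendsto (fun k => ζ k s a) atTop (𝓝 0))
    (hΓrec : ∀ k s a, Γ (k+1) s a = Γ k s a
        + β k s * dβ * (γ * (∑ s', p s a s' * vb k s') - Qb k s a + ζ k s a))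
    -- (ii) two-sided bound on v̄
    (εlo εhi : ℕ → S → ℝ)
    (hεlo : ∀ s, Tendsto (fun k => εlo k s) atTop (𝓝 0))
    (hεhi : ∀ s, Tendsto (fun k => εhi k s) atTop (𝓝 0))
    (hvlo : ∀ k s, εlo k s ≤ vb k s)
    (hvhi : ∀ k s, vb k s ≤ (lam / dα) *
        Finset.univ.sup' Finset.univ_nonempty (fun a => |Qb k s a|) + εhi k s)
    -- (iii) liminf bound on Γ
    (hΓliminf : ∀ s a, 0 ≤ atTop.liminf (fun k => Γ k s a))
    -- (iv) bounds relating Q̄ and Γ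
    (ηlo ηhi : ℕ → S → A → ℝ)
    (hηlo : ∀ s a, Tendsto (fun k => ηlo k s a) atTop (𝓝 0))
    (hηhi : ∀ s a, Tendsto (fun k => ηhi k s a) atTop (𝓝 0))
    (hQΓ : ∀ k s a, |Qb k s a| ≤ ηhi k s a + (1 / dβ) * Γ k s a ∧
        Qb k s a ≤ |Qb k s a| ∧ Γ k s a + ηlo k s a ≤ Qb k s a) :
    (∀ s a, Tendsto (fun k => Γ k s a) atTop (𝓝 0)) ∧
    (∀ s a, Tendsto (fun k => Qb k s a) atTop (𝓝 0)) ∧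
    (∀ s, Tendsto (fun k => vb k s) atTop (𝓝 0)) := by
  obtain ⟨BΓ, hBΓ⟩ := hΓbdd
  have hdα0 : 0 < dα := hdα.1
  have hdβ0 : 0 < dβ := hdβ.1
  have hγ0 : 0 < γ := hγ.1
  have hlam1 : 1 < lam := hlam.1
  set c : ℝ := γ * lam / (dα * dβ) with hc_def
  have hc0 : 0 < c := by positivity
  have hc1 : c < 1 := by
    rw [hc_def, div_lt_one (by positivity)]
    have := hlam.2
    rw [lt_div_iff₀ hγ0] at this
    nlinarith
  -- the max over (s,a) of Γ
  set Gm : ℕ → ℝ := fun k =>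
    Finset.univ.sup' Finset.univ_nonempty (fun sa : S × A => Γ k sa.1 sa.2) with hGm_def
  have hGmle : ∀ k s a, Γ k s a ≤ Gm k := fun k s a =>
    Finset.le_sup' (fun sa : S × A => Γ k sa.1 sa.2) (Finset.mem_univ (s, a))
  have hGmbd : ∀ k, |Gm k| ≤ BΓ := by
    intro k
    rw [abs_le]
    constructor
    · obtain ⟨sa⟩ : Nonempty (S × A) := inferInstance
      have := hGmle k sa.1 sa.2
      have := (abs_le.mp (hBΓ k sa.1 sa.2)).1
      linarith
    · exact Finset.sup'_le _ _ fun sa _ => (abs_le.mp (hBΓ k sa.1 sa.2)).2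
  have hGbddU : IsBoundedUnder (· ≤ ·) atTop Gm :=
    isBoundedUnder_of ⟨BΓ, fun k => (abs_le.mp (hGmbd k)).2⟩
  have hGbddL : IsBoundedUnder (· ≥ ·) atTop Gm :=
    isBoundedUnder_of ⟨-BΓ, fun k => (abs_le.mp (hGmbd k)).1⟩
  -- the combined error term
  set E : ℕ → ℝ := fun k =>
    γ * (lam / dα) * (∑ s, ∑ a, |ηhi k s a|) + γ * (∑ s, |εhi k s|)
      + (∑ s, ∑ a, |ηlo k s a|) + (∑ s, ∑ a, |ζ k s a|) with hE_def
  have hE0 : Tendsto E atTop (𝓝 0) := by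
    have h1 := (sum_abs_tendsto_zero₂ ηhi hηhi).const_mul (γ * (lam / dα))
    have h2 := (sum_abs_tendsto_zero₁ εhi hεhi).const_mul γ
    have h3 := sum_abs_tendsto_zero₂ ηlo hηlo
    have h4 := sum_abs_tendsto_zero₂ ζ hζ
    have := ((h1.add h2).add h3).add h4
    simpa using this
  -- key pointwise inequality
  have hkey : ∀ k s a, γ * (∑ s', p s a s' * vb k s') - Qb k s a + ζ k s a ≤
      c * Gm k + E k - Γ k s a := by
    intro k s a
    set H1 : ℝ := ∑ s, ∑ a, |ηhi k s a| with hH1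
    set H2 : ℝ := ∑ s, |εhi k s| with hH2
    set U : ℝ := (lam / dα) * ((1 / dβ) * Gm k + H1) + H2 with hU
    have hMq : ∀ s', (Finset.univ.sup' Finset.univ_nonempty fun a => |Qb k s' a|) ≤
        (1 / dβ) * Gm k + H1 := by
      intro s'
      refine Finset.sup'_le _ _ fun a' _ => ?_
      have h := (hQΓ k s' a').1
      have h2 : ηhi k s' a' ≤ H1 := (le_abs_self _).trans (le_sum_abs₂ (ηhi k) s' a')
      have h3 : (1 / dβ) * Γ k s' a' ≤ (1 / dβ) * Gm k :=
        mul_le_mul_of_nonneg_left (hGmle k s' a') (by positivity)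
      linarith
    have hv : ∀ s', vb k s' ≤ U := by
      intro s'
      have h1 := hvhi k s'
      have hε : εhi k s' ≤ H2 := (le_abs_self _).trans (le_sum_abs₁ (εhi k) s')
      have h2 : (lam / dα) * (Finset.univ.sup' Finset.univ_nonempty fun a => |Qb k s' a|) ≤
          (lam / dα) * ((1 / dβ) * Gm k + H1) :=
        mul_le_mul_of_nonneg_left (hMq s') (by positivity)
      rw [hU]; linarith
    have hsumv : (∑ s', p s a s' * vb k s') ≤ U := by
      calc ∑ s', p s a s' * vb k s' ≤ ∑ s', p s a s' * U :=
            Finset.sum_le_sum fun s' _ => mul_le_mul_of_nonneg_left (hv s') ((hp s a).1 s')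
        _ = U := by rw [← Finset.sum_mul, (hp s a).2, one_mul]
    have hQ : -Qb k s a ≤ -Γ k s a + ∑ s, ∑ a, |ηlo k s a| := by
      have h := (hQΓ k s a).2.2
      have h2 : -ηlo k s a ≤ ∑ s, ∑ a, |ηlo k s a| :=
        (neg_le_abs _).trans (le_sum_abs₂ (ηlo k) s a)
      linarith
    have hζ' : ζ k s a ≤ ∑ s, ∑ a, |ζ k s a| :=
      (le_abs_self _).trans (le_sum_abs₂ (ζ k) s a)
    have hγU : γ * U = c * Gm k + γ * (lam / dα) * H1 + γ * H2 := by
      rw [hU, hc_def]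
      field_simp
    have hmul : γ * (∑ s', p s a s' * vb k s') ≤ γ * U :=
      mul_le_mul_of_nonneg_left hsumv hγ0.le
    simp only [hE_def, ← hH1, ← hH2]
    clear_value c Gm H1 H2 U
    linarith
  set L : ℝ := atTop.limsup Gm with hL_def
  have hL0 : 0 ≤ L := by
    obtain ⟨s0⟩ : Nonempty S := inferInstance
    obtain ⟨a0⟩ : Nonempty A := inferInstance
    calc (0:ℝ) ≤ atTop.liminf (fun k => Γ k s0 a0) := hΓliminf s0 a0
      _ ≤ atTop.liminf Gm := by
          refine liminf_le_liminf (Eventually.of_forall fun k => hGmle k s0 a0) ?_ ?_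
          · exact isBoundedUnder_of ⟨-BΓ, fun k => (abs_le.mp (hBΓ k s0 a0)).1⟩
          · exact hGbddU.isCoboundedUnder_ge
      _ ≤ L := liminf_le_limsup hGbddU hGbddL
  -- main contraction estimate
  have hmain : ∀ ε : ℝ, 0 < ε → L ≤ c * (L + ε) + ε := by
    intro ε hε
    set T : ℝ := c * (L + ε) + ε with hT
    have hev1 : ∀ᶠ k in atTop, Gm k < L + ε :=
      eventually_lt_of_limsup_lt (by linarith) hGbddU
    have hev2 : ∀ᶠ k in atTop, E k < ε := hE0.eventually (gt_mem_nhds hε)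
    obtain ⟨k0, hk0⟩ := (hev1.and hev2).exists_forall_of_atTop
    -- for each (s,a), eventually Γ k s a ≤ T + δ
    have hΓT : ∀ (s : S) (a : A), ∀ δ : ℝ, 0 < δ → ∀ᶠ k in atTop, Γ k s a ≤ T + δ := by
      intro s a δ hδ
      set ψ : ℕ → ℝ := fun k => max (Γ k s a - T) 0 with hψ
      set b : ℕ → ℝ := fun k => β k s * dβ with hb
      have hb0 : ∀ k, 0 ≤ b k := fun k => mul_nonneg (hβmem k s).1 hdβ0.le
      have hψ0 : ∀ k, 0 ≤ ψ k := fun k => le_max_right _ _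
      have hstep : ∀ k, k0 ≤ k → ψ (k + 1) ≤ (1 - b k) * ψ k := by
        intro k hk
        obtain ⟨hG, hEk⟩ := hk0 k hk
        have hbd := hkey k s a
        have hb1 : b k ≤ 1 := by
          have h1 := (hβmem k s).2
          have h2 := hdβ.2
          have h3 := (hβmem k s).1
          show β k s * dβ ≤ 1
          nlinarith
        have hinc : γ * (∑ s', p s a s' * vb k s') - Qb k s a + ζ k s a ≤ T - Γ k s a := by
          have : c * Gm k ≤ c * (L + ε) := mul_le_mul_of_nonneg_left hG.le hc0.le
          rw [hT]; linarith
        have hrec := hΓrec k s a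
        have hΓ1 : Γ (k + 1) s a - T ≤ (1 - b k) * (Γ k s a - T) := by
          have hmul : b k * (γ * (∑ s', p s a s' * vb k s') - Qb k s a + ζ k s a) ≤
              b k * (T - Γ k s a) := mul_le_mul_of_nonneg_left hinc (hb0 k)
          have : β k s * dβ = b k := rfl
          rw [hrec, this]
          nlinarith [hmul]
        have hfac : 0 ≤ 1 - b k := by linarith
        show max (Γ (k + 1) s a - T) 0 ≤ (1 - b k) * ψ k
        refine max_le ?_ (mul_nonneg hfac (hψ0 k))
        calc Γ (k + 1) s a - T ≤ (1 - b k) * (Γ k s a - T) := hΓ1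
          _ ≤ (1 - b k) * ψ k := mul_le_mul_of_nonneg_left (le_max_left _ _) hfac
      have hbsum : Tendsto (fun K => ∑ k ∈ Finset.range K, b k) atTop atTop := by
        have heq : ∀ K, ∑ k ∈ Finset.range K, b k = (∑ k ∈ Finset.range K, β k s) * dβ := by
          intro K; rw [← Finset.sum_mul]
        simp only [heq]
        exact (hβsum s).atTop_mul_const hdβ0
      have hψlim : Tendsto ψ atTop (𝓝 0) := decay_lemma ψ b hψ0 k0 hstep hbsum
      filter_upwards [hψlim.eventually (gt_mem_nhds hδ)] with k hk
      have : Γ k s a - T ≤ ψ k := le_max_left _ _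
      linarith
    -- hence L ≤ T + δ for all δ, so L ≤ T
    have hLT : ∀ δ : ℝ, 0 < δ → L ≤ T + δ := by
      intro δ hδ
      have hall : ∀ᶠ k in atTop, ∀ sa : S × A, Γ k sa.1 sa.2 ≤ T + δ :=
        eventually_all.mpr fun sa => hΓT sa.1 sa.2 δ hδ
      have hGmle' : ∀ᶠ k in atTop, Gm k ≤ T + δ := by
        filter_upwards [hall] with k hk
        exact Finset.sup'_le _ _ fun sa _ => hk sa
      exact limsup_le_of_le hGbddL.isCoboundedUnder_le hGmle'
    have := le_of_forall_pos_le_add (fun δ hδ => hLT δ hδ)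
    linarith
  have hLle0 : L ≤ 0 := by
    by_contra h
    push_neg at h
    have h1c : 0 < 1 - c := by linarith
    have hc1' : 0 < c + 1 := by linarith
    have hprod : 0 < (1 - c) * L := mul_pos h1c h
    have hε : 0 < (1 - c) * L / (2 * (c + 1)) := div_pos hprod (by linarith)
    have hmainε := hmain _ hε
    have heq : (c + 1) * ((1 - c) * L / (2 * (c + 1))) = (1 - c) * L / 2 := by
      field_simp
    nlinarith [hmainε, heq, hprod]
  have hLeq : L = 0 := le_antisymm hLle0 hL0
  -- conclude Γ → 0
  have hΓ0 : ∀ s a, Tendsto (fun k => Γ k s a) atTop (𝓝 0) := by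
    intro s a
    have hbU : IsBoundedUnder (· ≤ ·) atTop (fun k => Γ k s a) :=
      isBoundedUnder_of ⟨BΓ, fun k => (abs_le.mp (hBΓ k s a)).2⟩
    have hbL : IsBoundedUnder (· ≥ ·) atTop (fun k => Γ k s a) :=
      isBoundedUnder_of ⟨-BΓ, fun k => (abs_le.mp (hBΓ k s a)).1⟩
    have hls : atTop.limsup (fun k => Γ k s a) ≤ 0 := by
      calc atTop.limsup (fun k => Γ k s a) ≤ atTop.limsup Gm :=
            limsup_le_limsup (Eventually.of_forall fun k => hGmle k s a)
              hbL.isCoboundedUnder_le hGbddU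
        _ = 0 := hLeq
    exact tendsto_of_le_liminf_of_limsup_le (hΓliminf s a) hls hbU hbL
  have hQ0 : ∀ s a, Tendsto (fun k => Qb k s a) atTop (𝓝 0) := by
    intro s a
    have hlow : Tendsto (fun k => Γ k s a + ηlo k s a) atTop (𝓝 0) := by
      have := (hΓ0 s a).add (hηlo s a); simpa using this
    have hhigh : Tendsto (fun k => ηhi k s a + (1 / dβ) * Γ k s a) atTop (𝓝 0) := by
      have := (hηhi s a).add ((hΓ0 s a).const_mul (1 / dβ)); simpa using this
    refine tendsto_of_tendsto_of_tendsto_of_le_of_le hlow hhigh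
      (fun k => (hQΓ k s a).2.2) (fun k => ((hQΓ k s a).2.1).trans (hQΓ k s a).1)
  refine ⟨hΓ0, hQ0, ?_⟩
  intro s
  have hup : Tendsto (fun k => (lam / dα) * (∑ a, |Qb k s a|) + εhi k s) atTop (𝓝 0) := by
    have h1 : Tendsto (fun k => ∑ a, |Qb k s a|) atTop (𝓝 0) :=
      sum_abs_tendsto_zero₁ (fun k a => Qb k s a) (fun a => hQ0 s a)
    have := (h1.const_mul (lam / dα)).add (hεhi s)
    simpa using this
  refine tendsto_of_tendsto_of_tendsto_of_le_of_le ?_ hup (hvlo · s) ?_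
  · exact hεlo s
  · intro k
    have hsup : (Finset.univ.sup' Finset.univ_nonempty fun a => |Qb k s a|) ≤
        ∑ a, |Qb k s a| :=
      Finset.sup'_le _ _ fun a _ => le_sum_abs₁ (fun a => Qb k s a) a
    have := hvhi k s
    have h2 : (lam / dα) * (Finset.univ.sup' Finset.univ_nonempty fun a => |Qb k s a|) ≤
        (lam / dα) * (∑ a, |Qb k s a|) := mul_le_mul_of_nonneg_left hsup (by positivity)
    linarith
end
end
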